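/- arXiv:1603.03955 — 2 statements merged into one kernel-verified Lean document; each statement's English description precedes it below -/
import Mathlib

section
/- Fix μ > 0, ν > 0, and η ∈ ℝ with μ + η ≥ 0 and 2μ + η > 0, set μ̃ := 2μ+η and η̃ := μ+η, and fix ρ̂ > 0. For ξ ∈ [−1, 1] and τ := 1 − ξ², let β be the 6×6 complex matrix whose rows are: (0,0,0, iτρ̂+μξ², 0, 0), (0,0,0, 0, iτρ̂+μ̃ξ², 0), (0,0,0, 0, 0, iτρ̂+νξ²), (μ̃⁻¹, 0, 0, 0, −iξη̃μ̃⁻¹, 0), (0, μ⁻¹, 0, −iξη̃μ⁻¹, 0, 0), (0, 0, ν⁻¹, 0, 0, 0). Then β is hyperbolic: every eigenvalue of β has nonzero real part. -/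
open Complex

@[simp] lemma cons_val_five' {m : ℕ} {α : Type*} (x : α) (u : Fin (m + 5) → α) :
    Matrix.vecCons x u 5 =
      Matrix.vecHead (Matrix.vecTail (Matrix.vecTail (Matrix.vecTail (Matrix.vecTail u)))) := rfl

lemma real_imag_zero {R S : ℝ} (h : (R:ℂ) + (S:ℂ)*I = 0) : R = 0 ∧ S = 0 := by
  constructor
  · simpa using congrArg Complex.re h
  · simpa using congrArg Complex.im h

lemma beta_aux2 (ν ρ ξ y : ℝ) (hν : 0 < ν) (hρ : 0 < ρ)
    (h1 : ν * ξ ^ 2 + ν * y ^ 2 = 0) (h2 : (1 - ξ ^ 2) * ρ = 0) : False := by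
  nlinarith [mul_pos hν hρ, sq_nonneg y, sq_nonneg ξ, mul_nonneg (sq_nonneg ξ) hρ.le]

lemma beta_aux (μ η ρ ξ y : ℝ) (hμ : 0 < μ) (hμt : 0 < 2 * μ + η) (hηt : 0 ≤ μ + η)
    (hρ : 0 < ρ)
    (hR : ((2*μ+η)*y^2 + μ*ξ^2) * (μ*y^2 + (2*μ+η)*ξ^2) - (1-ξ^2)^2*ρ^2
        - ξ^2*(μ+η)^2*y^2 = 0)
    (hS : (1-ξ^2)*ρ * (((2*μ+η)*y^2 + μ*ξ^2) + (μ*y^2 + (2*μ+η)*ξ^2)) = 0) : False := by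
  rcases eq_or_ne (1 - ξ^2) 0 with ht | ht
  · have hx : ξ^2 = 1 := by linarith
    rw [hx] at hR
    nlinarith [mul_pos hμ hμt, sq_nonneg y, sq_nonneg (y^2),
      mul_nonneg (mul_nonneg hμ.le hμt.le) (sq_nonneg (y^2)),
      mul_nonneg (mul_nonneg hμ.le hμt.le) (sq_nonneg y), hηt]
  · have hPQ : ((2*μ+η)*y^2 + μ*ξ^2) + (μ*y^2 + (2*μ+η)*ξ^2) = 0 :=
      (mul_eq_zero.mp hS).resolve_left (mul_ne_zero ht hρ.ne')
    have hQnn : (0:ℝ) ≤ μ*y^2 + (2*μ+η)*ξ^2 := by positivity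
    have hPnn : (0:ℝ) ≤ (2*μ+η)*y^2 + μ*ξ^2 := by positivity
    have hP : (2*μ+η)*y^2 + μ*ξ^2 = 0 := by linarith
    have hy : y = 0 := by
      have h : y^2 = 0 := le_antisymm (by nlinarith [sq_nonneg ξ]) (sq_nonneg y)
      exact pow_eq_zero_iff (two_ne_zero) |>.mp h
    have hx : ξ = 0 := by
      have h : ξ^2 = 0 := le_antisymm (by nlinarith [sq_nonneg y]) (sq_nonneg ξ)
      exact pow_eq_zero_iff (two_ne_zero) |>.mp h
    subst hy hx
    norm_num at hR
    nlinarith [hρ]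

/-- **Hyperbolicity of `β`** (Guès–Métivier–Williams–Zumbrun). On the parabolic
boundary `λ = iτ`, `τ = 1 − ξ²`, `ξ ∈ [−1,1]`, every eigenvalue of the matrix `β`
arising in the high-frequency analysis has nonzero real part. -/
theorem beta_hyperbolic
    (μ η ν ρ ξ : ℝ) (hμ : 0 < μ) (hν : 0 < ν) (hηt : 0 ≤ μ + η) (hμt : 0 < 2 * μ + η)
    (hρ : 0 < ρ) (hξ : ξ ∈ Set.Icc (-1 : ℝ) 1) :
    ∀ z ∈ spectrum ℂ
      (!![0, 0, 0, I * (1 - ξ ^ 2) * ρ + μ * ξ ^ 2, 0, 0;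
          0, 0, 0, 0, I * (1 - ξ ^ 2) * ρ + (2 * μ + η) * ξ ^ 2, 0;
          0, 0, 0, 0, 0, I * (1 - ξ ^ 2) * ρ + ν * ξ ^ 2;
          (2 * μ + η)⁻¹, 0, 0, 0, -(I * ξ * (μ + η) * (2 * μ + η)⁻¹), 0;
          0, μ⁻¹, 0, -(I * ξ * (μ + η) * μ⁻¹), 0, 0;
          0, 0, ν⁻¹, 0, 0, 0] : Matrix (Fin 6) (Fin 6) ℂ),
      z.re ≠ 0 := by
  intro z hz hre
  rw [← AlgEquiv.spectrum_eq (Matrix.toLinAlgEquiv' : Matrix (Fin 6) (Fin 6) ℂ ≃ₐ[ℂ] _)] at hz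
  have hev := Module.End.HasEigenvalue.of_mem_spectrum hz
  obtain ⟨v, hv1, hv0⟩ := hev.exists_hasEigenvector
  have hmv := Module.End.mem_eigenspace_iff.mp hv1
  rw [Matrix.toLinAlgEquiv'_apply] at hmv
  have e0 := congrFun hmv 0
  have e1 := congrFun hmv 1
  have e2 := congrFun hmv 2
  have e3 := congrFun hmv 3
  have e4 := congrFun hmv 4
  have e5 := congrFun hmv 5
  simp [Matrix.mulVec, dotProduct, Fin.sum_univ_six] at e0 e1 e2 e3 e4 e5
  obtain ⟨y, hzy⟩ : ∃ y : ℝ, z = (y : ℂ) * I :=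
    ⟨z.im, by apply Complex.ext <;> simp [hre]⟩
  rw [hzy] at e0 e1 e2 e3 e4 e5
  have hμc : ((μ:ℂ)) ≠ 0 := by exact_mod_cast hμ.ne'
  have hνc : ((ν:ℂ)) ≠ 0 := by exact_mod_cast hν.ne'
  have hμtc : (2*(μ:ℂ)+η) ≠ 0 := by
    have : ((2*μ+η : ℝ) : ℂ) ≠ 0 := by exact_mod_cast hμt.ne'
    push_cast at this; convert this using 1
  -- inverse-free forms of the last three rows
  have e3' : v 0 + -(I*(ξ:ℂ)*((μ:ℂ)+η)*v 4) = (2*(μ:ℂ)+η)*((y:ℂ)*I*v 3) := by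
    rw [← e3]; field_simp
    rw [mul_div_cancel_right₀ _ (by rwa [mul_comm] : (μ:ℂ)*2+η ≠ 0)]
  have e4' : v 1 + -(I*(ξ:ℂ)*((μ:ℂ)+η)*v 3) = (μ:ℂ)*((y:ℂ)*I*v 4) := by
    rw [← e4]; field_simp
  have e5' : v 2 = (ν:ℂ)*((y:ℂ)*I*v 5) := by
    rw [← e5]; field_simp
  -- v 5 = 0 and v 2 = 0
  have h5 : v 5 = 0 := by
    by_contra h5
    have hc : (I*(1-(ξ:ℂ)^2)*(ρ:ℂ) + (ν:ℂ)*(ξ:ℂ)^2 + (ν:ℂ)*(y:ℂ)^2) * v 5 = 0 := by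
      linear_combination e2 + ((y:ℂ)*I)*e5' + (ν:ℂ)*(y:ℂ)^2*(v 5)*Complex.I_sq
    have hc0 := (mul_eq_zero.mp hc).resolve_right h5
    have hc1 : (((ν*ξ^2 + ν*y^2 : ℝ)):ℂ) + (((1-ξ^2)*ρ : ℝ))*I = 0 := by
      push_cast
      linear_combination hc0
    obtain ⟨hA, hB⟩ := real_imag_zero hc1
    exact beta_aux2 ν ρ ξ y hν hρ hA hB
  have h2 : v 2 = 0 := by rw [h5] at e5'; simpa using e5'
  -- the 2×2 quadratic pencil for (v 3, v 4)
  have h3 : ((2*(μ:ℂ)+η)*((y:ℂ)*I)^2 - (I*(1-(ξ:ℂ)^2)*(ρ:ℂ) + (μ:ℂ)*(ξ:ℂ)^2)) * v 3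
      = ((ξ:ℂ)*((μ:ℂ)+η)*(y:ℂ)) * v 4 := by
    linear_combination (-((y:ℂ)*I))*e3' - e0 - ((ξ:ℂ)*((μ:ℂ)+η)*(y:ℂ))*(v 4)*Complex.I_sq
  have h4 : ((μ:ℂ)*((y:ℂ)*I)^2 - (I*(1-(ξ:ℂ)^2)*(ρ:ℂ) + (2*(μ:ℂ)+η)*(ξ:ℂ)^2)) * v 4
      = ((ξ:ℂ)*((μ:ℂ)+η)*(y:ℂ)) * v 3 := by
    linear_combination (-((y:ℂ)*I))*e4' - e1 - ((ξ:ℂ)*((μ:ℂ)+η)*(y:ℂ))*(v 3)*Complex.I_sq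
  set F3 : ℂ := (2*(μ:ℂ)+η)*((y:ℂ)*I)^2 - (I*(1-(ξ:ℂ)^2)*(ρ:ℂ) + (μ:ℂ)*(ξ:ℂ)^2) with hF3
  set F4 : ℂ := (μ:ℂ)*((y:ℂ)*I)^2 - (I*(1-(ξ:ℂ)^2)*(ρ:ℂ) + (2*(μ:ℂ)+η)*(ξ:ℂ)^2) with hF4
  set σ : ℂ := (ξ:ℂ)*((μ:ℂ)+η)*(y:ℂ) with hσ
  have hKform : F3*F4 - σ^2 =
      (((((2*μ+η)*y^2 + μ*ξ^2) * (μ*y^2 + (2*μ+η)*ξ^2) - (1-ξ^2)^2*ρ^2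
        - ξ^2*(μ+η)^2*y^2 : ℝ)):ℂ)
      + (((1-ξ^2)*ρ * (((2*μ+η)*y^2 + μ*ξ^2) + (μ*y^2 + (2*μ+η)*ξ^2)) : ℝ))*I := by
    rw [hF3, hF4, hσ]
    linear_combination (norm := (push_cast; ring1))
      (((1-(ξ:ℂ)^2)*(ρ:ℂ))^2
        + (-(((2*(μ:ℂ)+η)*(y:ℂ)^2 + (μ:ℂ)*(ξ:ℂ)^2)) - I*(1-(ξ:ℂ)^2)*(ρ:ℂ))*(μ:ℂ)*(y:ℂ)^2
        + (2*(μ:ℂ)+η)*(y:ℂ)^2*(-(((μ:ℂ)*(y:ℂ)^2 + (2*(μ:ℂ)+η)*(ξ:ℂ)^2)) - I*(1-(ξ:ℂ)^2)*(ρ:ℂ))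
        + (μ:ℂ)*(2*(μ:ℂ)+η)*(y:ℂ)^4*(I^2+1)) * Complex.I_sq
  have hKne : F3*F4 - σ^2 ≠ 0 := by
    intro h
    rw [hKform] at h
    obtain ⟨hA, hB⟩ := real_imag_zero h
    exact beta_aux μ η ρ ξ y hμ hμt hηt hρ hA hB
  have h3v : v 3 = 0 := by
    have : (F3*F4 - σ^2) * v 3 = 0 := by linear_combination F4*h3 + σ*h4
    exact (mul_eq_zero.mp this).resolve_left hKne
  have h4v : v 4 = 0 := by
    have : (F3*F4 - σ^2) * v 4 = 0 := by linear_combination F3*h4 + σ*h3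
    exact (mul_eq_zero.mp this).resolve_left hKne
  have h0v : v 0 = 0 := by
    rw [h3v, h4v] at e3'; simpa using e3'
  have h1v : v 1 = 0 := by
    rw [h3v, h4v] at e4'; simpa using e4'
  apply hv0
  funext i
  fin_cases i
  · exact h0v
  · exact h1v
  · exact h2
  · exact h3v
  · exact h4v
  · exact h5
end

section
/- Let k, m ≥ 1, let N = blockdiag(N₋, N₊) with N₋ ∈ ℂ^{k×k}, N₊ ∈ ℂ^{m×m} satisfying (N₋+N₋*)/2 ≤ c₋ I and (N₊+N₊*)/2 ≥ c₊ I, and let Θ ∈ ℂ^{(k+m)×(k+m)} have blocks Θ_{--}, Θ_{-+}, Θ_{+-}, Θ_{++} with ℓ² operator norms θ₋₋, θ₋₊, θ₊₋, θ₊₊, where θ₋₊, θ₊₋ > 0. Assume δ := c₊ − c₋ > θ₋₋ + θ₊₊ + 2√(θ₋₊θ₊₋), and let ζ₋ < ζ₊ be the roots of θ₊₋ζ² − (δ−θ₋₋−θ₊₊)ζ + θ₋₊. Then every eigenvector w = (w₋, w₊) ∈ ℂᵏ × ℂᵐ of N + Θ satisfies either ‖w₋‖ ≤ ζ₋ ‖w₊‖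 or ‖w₋‖ ≥ ζ₊ ‖w₊‖. -/
open scoped Matrix Matrix.Norms.L2Operator ComplexOrder

open Matrix

lemma dot_self_eq (n : ℕ) (x : EuclideanSpace ℂ (Fin n)) :
    star (x : Fin n → ℂ) ⬝ᵥ (x : Fin n → ℂ) = ((‖x‖ ^ 2 : ℝ) : ℂ) := by
  have := inner_self_eq_norm_sq_to_K (𝕜 := ℂ) x
  rw [EuclideanSpace.inner_eq_star_dotProduct, dotProduct_comm] at this
  simpa [Complex.ofReal_pow] using this

lemma abs_re_dot_mulVec_le (n p : ℕ) (A : Matrix (Fin n) (Fin p) ℂ)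
    (x : EuclideanSpace ℂ (Fin n)) (y : EuclideanSpace ℂ (Fin p)) :
    |(star (x : Fin n → ℂ) ⬝ᵥ (A *ᵥ y)).re| ≤ ‖A‖ * (‖x‖ * ‖y‖) := by
  have h0 : star (x : Fin n → ℂ) ⬝ᵥ (A *ᵥ y) =
      @inner ℂ _ _ x ((EuclideanSpace.equiv (Fin n) ℂ).symm (A *ᵥ y)) := by
      rw [EuclideanSpace.inner_eq_star_dotProduct, dotProduct_comm]; rfl
  rw [h0]
  have h1 : ‖(@inner ℂ _ _ x ((EuclideanSpace.equiv (Fin n) ℂ).symm (A *ᵥ y)) : ℂ)‖ ≤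
      ‖x‖ * ‖(EuclideanSpace.equiv (Fin n) ℂ).symm (A *ᵥ y)‖ := norm_inner_le_norm _ _
  have h2 := A.l2_opNorm_mulVec y
  have h3 := Complex.abs_re_le_norm
    (@inner ℂ _ _ x ((EuclideanSpace.equiv (Fin n) ℂ).symm (A *ᵥ y)))
  nlinarith [norm_nonneg x, norm_nonneg ((EuclideanSpace.equiv (Fin n) ℂ).symm (A *ᵥ y)),
    norm_nonneg A]

lemma dot_conjTranspose_eq (n : ℕ) (A : Matrix (Fin n) (Fin n) ℂ) (x : Fin n → ℂ) :
    star x ⬝ᵥ (Aᴴ *ᵥ x) = star (star x ⬝ᵥ (A *ᵥ x)) := by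
  calc star x ⬝ᵥ (Aᴴ *ᵥ x) = (star x ᵥ* Aᴴ) ⬝ᵥ x := Matrix.dotProduct_mulVec _ _ _
    _ = star (A *ᵥ x) ⬝ᵥ x := by rw [Matrix.star_mulVec]
    _ = star (star x ⬝ᵥ (A *ᵥ x)) := by rw [star_dotProduct]

lemma dot_smul_self (n : ℕ) (μ : ℂ) (x : EuclideanSpace ℂ (Fin n)) :
    star (x : Fin n → ℂ) ⬝ᵥ (μ • (x : Fin n → ℂ)) = μ * ((‖x‖ ^ 2 : ℝ) : ℂ) := by
  have h : star (x : Fin n → ℂ) ⬝ᵥ (μ • (x : Fin n → ℂ)) =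
      μ * (star (x : Fin n → ℂ) ⬝ᵥ (x : Fin n → ℂ)) := by
    simp only [dotProduct, PiLp.smul_apply, Pi.smul_apply, smul_eq_mul, Finset.mul_sum, Pi.star_apply]
    exact Finset.sum_congr rfl fun i _ => by ring
  rw [h, dot_self_eq]

lemma re_quad_le (n : ℕ) (A : Matrix (Fin n) (Fin n) ℂ) (c : ℝ)
    (h : ((c : ℂ) • (1 : Matrix (Fin n) (Fin n) ℂ) - (1/2 : ℂ) • (A + Aᴴ)).PosSemidef)
    (x : EuclideanSpace ℂ (Fin n)) :
    (star (x : Fin n → ℂ) ⬝ᵥ (A *ᵥ x)).re ≤ c * ‖x‖ ^ 2 := by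
  have h0 := h.dotProduct_mulVec_nonneg (x : Fin n → ℂ)
  simp only [Matrix.sub_mulVec, Matrix.add_mulVec, Matrix.smul_mulVec,
    Matrix.one_mulVec, dotProduct_sub, dotProduct_add, dotProduct_smul] at h0
  rw [dot_conjTranspose_eq, dot_self_eq] at h0
  rw [Complex.le_def] at h0
  obtain ⟨h0re, -⟩ := h0
  set p := star (x : Fin n → ℂ) ⬝ᵥ (A *ᵥ x) with hp
  simp only [smul_eq_mul, Complex.zero_re, Complex.sub_re, Complex.mul_re, Complex.ofReal_re,
    Complex.ofReal_im, Complex.add_re, Complex.add_im, Complex.sub_im, Complex.mul_im,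
    Complex.star_def, Complex.conj_re, Complex.conj_im, Complex.div_re, Complex.div_im,
    Complex.one_re, Complex.one_im] at h0re
  norm_num [Complex.normSq_apply] at h0re
  nlinarith [h0re]

lemma re_quad_ge (n : ℕ) (A : Matrix (Fin n) (Fin n) ℂ) (c : ℝ)
    (h : ((1/2 : ℂ) • (A + Aᴴ) - (c : ℂ) • (1 : Matrix (Fin n) (Fin n) ℂ)).PosSemidef)
    (x : EuclideanSpace ℂ (Fin n)) :
    c * ‖x‖ ^ 2 ≤ (star (x : Fin n → ℂ) ⬝ᵥ (A *ᵥ x)).re := by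
  have h0 := h.dotProduct_mulVec_nonneg (x : Fin n → ℂ)
  simp only [Matrix.sub_mulVec, Matrix.add_mulVec, Matrix.smul_mulVec,
    Matrix.one_mulVec, dotProduct_sub, dotProduct_add, dotProduct_smul] at h0
  rw [dot_conjTranspose_eq, dot_self_eq] at h0
  rw [Complex.le_def] at h0
  obtain ⟨h0re, -⟩ := h0
  simp only [smul_eq_mul, Complex.zero_re, Complex.sub_re, Complex.mul_re, Complex.ofReal_re,
    Complex.ofReal_im, Complex.add_re, Complex.add_im, Complex.sub_im, Complex.mul_im,
    Complex.star_def, Complex.conj_re, Complex.conj_im, Complex.div_re, Complex.div_im,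
    Complex.one_re, Complex.one_im] at h0re
  norm_num [Complex.normSq_apply] at h0re
  nlinarith [h0re]

set_option maxHeartbeats 1000000 in
lemma cone_sep_aux (k m : ℕ)
    (Nm : Matrix (Fin k) (Fin k) ℂ) (Np : Matrix (Fin m) (Fin m) ℂ)
    (T11 : Matrix (Fin k) (Fin k) ℂ) (T12 : Matrix (Fin k) (Fin m) ℂ)
    (T21 : Matrix (Fin m) (Fin k) ℂ) (T22 : Matrix (Fin m) (Fin m) ℂ)
    (cm cp : ℝ)
    (hNm : ((cm : ℂ) • (1 : Matrix (Fin k) (Fin k) ℂ) -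
      (1 / 2 : ℂ) • (Nm + Nmᴴ)).PosSemidef)
    (hNp : ((1 / 2 : ℂ) • (Np + Npᴴ) -
      (cp : ℂ) • (1 : Matrix (Fin m) (Fin m) ℂ)).PosSemidef)
    (hmp : 0 < ‖T12‖) (hpm : 0 < ‖T21‖)
    (htrack : ‖T11‖ + ‖T22‖ + 2 * Real.sqrt (‖T12‖ * ‖T21‖) < cp - cm)
    (μ : ℂ) (u : EuclideanSpace ℂ (Fin k)) (v : EuclideanSpace ℂ (Fin m))
    (h1 : (Nm + T11) *ᵥ (u : Fin k → ℂ) + T12 *ᵥ (v : Fin m → ℂ) = μ • (u : Fin k → ℂ))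
    (h2 : T21 *ᵥ (u : Fin k → ℂ) + (Np + T22) *ᵥ (v : Fin m → ℂ) = μ • (v : Fin m → ℂ)) :
    ‖u‖ ≤ (((cp - cm) - ‖T11‖ - ‖T22‖ -
        Real.sqrt (((cp - cm) - ‖T11‖ - ‖T22‖) ^ 2 - 4 * ‖T12‖ * ‖T21‖)) / (2 * ‖T21‖)) * ‖v‖ ∨
    (((cp - cm) - ‖T11‖ - ‖T22‖ +
        Real.sqrt (((cp - cm) - ‖T11‖ - ‖T22‖) ^ 2 - 4 * ‖T12‖ * ‖T21‖)) / (2 * ‖T21‖)) * ‖v‖ ≤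
      ‖u‖ := by
  -- inner products of the two block equations
  have d1 := congrArg (fun z => star (u : Fin k → ℂ) ⬝ᵥ z) h1
  have d2 := congrArg (fun z => star (v : Fin m → ℂ) ⬝ᵥ z) h2
  simp only [Matrix.add_mulVec, dotProduct_add, dotProduct_smul, smul_eq_mul] at d1 d2
  rw [dot_self_eq] at d1 d2
  have d1re := congrArg Complex.re d1
  have d2re := congrArg Complex.re d2
  simp only [Complex.add_re, Complex.mul_re, Complex.ofReal_re, Complex.ofReal_im,
    mul_zero, sub_zero] at d1re d2re
  have b1 := re_quad_le k Nm cm hNm u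
  have b2 := abs_re_dot_mulVec_le k k T11 u u
  have b3 := abs_re_dot_mulVec_le k m T12 u v
  have c1 := re_quad_ge m Np cp hNp v
  have c2 := abs_re_dot_mulVec_le m m T22 v v
  have c3 := abs_re_dot_mulVec_le m k T21 v u
  obtain ⟨b2l, b2r⟩ := abs_le.mp b2
  obtain ⟨b3l, b3r⟩ := abs_le.mp b3
  obtain ⟨c2l, c2r⟩ := abs_le.mp c2
  obtain ⟨c3l, c3r⟩ := abs_le.mp c3
  set a := ‖u‖ with ha0
  set b := ‖v‖ with hb0
  clear_value a b
  have hann : 0 ≤ a := by rw [ha0]; exact norm_nonneg _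
  have hbnn : 0 ≤ b := by rw [hb0]; exact norm_nonneg _
  have key1 : μ.re * a ^ 2 ≤ (cm + ‖T11‖) * a ^ 2 + ‖T12‖ * (a * b) := by
    nlinarith [d1re, b1, b2r, b3r]
  have key2 : (cp - ‖T22‖) * b ^ 2 - ‖T21‖ * (b * a) ≤ μ.re * b ^ 2 := by
    nlinarith [d2re, c1, c2l, c3l]
  -- quadratic root data
  clear d1 d2 d1re d2re b1 b2 b2l b2r b3 b3l b3r c1 c2 c2l c2r c3 c3l c3r h1 h2 hNm hNp ha0 hb0 u v Nm Np
  have hθnn : (0:ℝ) ≤ ‖T12‖ * ‖T21‖ := by positivity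
  have hsq : Real.sqrt (‖T12‖ * ‖T21‖) ^ 2 = ‖T12‖ * ‖T21‖ := Real.sq_sqrt hθnn
  have hsqnn := Real.sqrt_nonneg (‖T12‖ * ‖T21‖)
  set d := (cp - cm) - ‖T11‖ - ‖T22‖ with hd0
  clear_value d
  have hd : 2 * Real.sqrt (‖T12‖ * ‖T21‖) < d := by rw [hd0]; linarith
  have hdpos : 0 < d := by linarith
  have hdisc : 0 < d ^ 2 - 4 * ‖T12‖ * ‖T21‖ := by nlinarith
  set s := Real.sqrt (d ^ 2 - 4 * ‖T12‖ * ‖T21‖) with hs0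
  clear_value s
  have hs2 : s ^ 2 = d ^ 2 - 4 * ‖T12‖ * ‖T21‖ := by rw [hs0]; exact Real.sq_sqrt hdisc.le
  have hspos : 0 < s := by rw [hs0]; exact Real.sqrt_pos.mpr hdisc
  have hsd : s < d := by nlinarith
  have k1b := mul_le_mul_of_nonneg_right key1 (sq_nonneg b)
  have k2a := mul_le_mul_of_nonneg_right key2 (sq_nonneg a)
  have hq : d * (a ^ 2 * b ^ 2) ≤ ‖T21‖ * (a ^ 2 * (a * b)) + ‖T12‖ * ((a * b) * b ^ 2) := by
    rw [hd0]; nlinarith [k1b, k2a]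
  by_contra hcon
  push_neg at hcon
  obtain ⟨hc1, hc2⟩ := hcon
  have h2pm : 0 < 2 * ‖T21‖ := by linarith
  have hc1' : (d - s) * b < 2 * ‖T21‖ * a := by
    rw [div_mul_eq_mul_div, div_lt_iff₀ h2pm] at hc1; linarith
  have hc2' : 2 * ‖T21‖ * a < (d + s) * b := by
    rw [div_mul_eq_mul_div, lt_div_iff₀ h2pm] at hc2; linarith
  have hb : 0 < b := by nlinarith [hc1', hc2', hspos, hbnn, hann, hpm]
  have ha : 0 < a := by nlinarith [hc1', hb, hsd, hpm]
  have hfac : ‖T21‖ * a ^ 2 - d * (a * b) + ‖T12‖ * b ^ 2 < 0 := by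
    nlinarith [mul_pos (sub_pos.mpr hc1') (sub_pos.mpr hc2'), hs2, hpm, sq_nonneg b,
      sq_nonneg a, mul_pos hb hb, mul_pos ha hb]
  nlinarith [hq, hfac, mul_pos ha hb]


/-- **Eigenvector separation into cones (tracking lemma, constant-coefficient case).**
If `Re N₋ ≤ c₋I`, `Re N₊ ≥ c₊I` and `δ := c₊ − c₋` exceeds
`‖Θ₋₋‖ + ‖Θ₊₊‖ + 2√(‖Θ₋₊‖‖Θ₊₋‖)`, then every eigenvector `w = (w₋, w₊)` of `N + Θ`
satisfies `‖w₋‖ ≤ ζ₋‖w₊‖` or `‖w₋‖ ≥ ζ₊‖w₊‖`, where `ζ₋ < ζ₊` are the roots of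
`θ₊₋ζ² − (δ−θ₋₋−θ₊₊)ζ + θ₋₊`. -/
theorem eigenvector_cone_separation (k m : ℕ) (hk : 1 ≤ k) (hm : 1 ≤ m)
    (Nm : Matrix (Fin k) (Fin k) ℂ) (Np : Matrix (Fin m) (Fin m) ℂ)
    (Θ : Matrix (Fin k ⊕ Fin m) (Fin k ⊕ Fin m) ℂ) (cm cp : ℝ)
    (hNm : ((cm : ℂ) • (1 : Matrix (Fin k) (Fin k) ℂ) -
      (1 / 2 : ℂ) • (Nm + Nmᴴ)).PosSemidef)
    (hNp : ((1 / 2 : ℂ) • (Np + Npᴴ) -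
      (cp : ℂ) • (1 : Matrix (Fin m) (Fin m) ℂ)).PosSemidef)
    (hmp : 0 < ‖Θ.toBlocks₁₂‖) (hpm : 0 < ‖Θ.toBlocks₂₁‖)
    (htrack : ‖Θ.toBlocks₁₁‖ + ‖Θ.toBlocks₂₂‖ +
      2 * Real.sqrt (‖Θ.toBlocks₁₂‖ * ‖Θ.toBlocks₂₁‖) < cp - cm) :
    ∀ (μ : ℂ) (w : (Fin k ⊕ Fin m) → ℂ), w ≠ 0 →
      (Matrix.fromBlocks Nm 0 0 Np + Θ) *ᵥ w = μ • w →
      ‖(EuclideanSpace.equiv (Fin k) ℂ).symm (fun i => w (Sum.inl i))‖ ≤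
        (((cp - cm) - ‖Θ.toBlocks₁₁‖ - ‖Θ.toBlocks₂₂‖ -
            Real.sqrt (((cp - cm) - ‖Θ.toBlocks₁₁‖ - ‖Θ.toBlocks₂₂‖) ^ 2 -
              4 * ‖Θ.toBlocks₁₂‖ * ‖Θ.toBlocks₂₁‖)) / (2 * ‖Θ.toBlocks₂₁‖)) *
          ‖(EuclideanSpace.equiv (Fin m) ℂ).symm (fun j => w (Sum.inr j))‖ ∨
      (((cp - cm) - ‖Θ.toBlocks₁₁‖ - ‖Θ.toBlocks₂₂‖ +
            Real.sqrt (((cp - cm) - ‖Θ.toBlocks₁₁‖ - ‖Θ.toBlocks₂₂‖) ^ 2 -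
              4 * ‖Θ.toBlocks₁₂‖ * ‖Θ.toBlocks₂₁‖)) / (2 * ‖Θ.toBlocks₂₁‖)) *
          ‖(EuclideanSpace.equiv (Fin m) ℂ).symm (fun j => w (Sum.inr j))‖ ≤
        ‖(EuclideanSpace.equiv (Fin k) ℂ).symm (fun i => w (Sum.inl i))‖ := by
  intro μ w hw heig
  rw [← Matrix.fromBlocks_toBlocks Θ, Matrix.fromBlocks_add, Matrix.fromBlocks_mulVec] at heig
  simp only [zero_add] at heig
  refine cone_sep_aux k m Nm Np Θ.toBlocks₁₁ Θ.toBlocks₁₂ Θ.toBlocks₂₁ Θ.toBlocks₂₂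
    cm cp hNm hNp hmp hpm htrack μ
    ((EuclideanSpace.equiv (Fin k) ℂ).symm (fun i => w (Sum.inl i)))
    ((EuclideanSpace.equiv (Fin m) ℂ).symm (fun j => w (Sum.inr j))) ?_ ?_
  · funext i
    exact congrFun heig (Sum.inl i)
  · funext j
    exact congrFun heig (Sum.inr j)
end
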